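/- The 4-regular graphs R₁ and R₂ on Fin 8 satisfy: (i) there is no graph isomorphism between R₁ and R₂ (indeed their minimum vertex cover sizes are 5 and 6 respectively); and (ii) for every dimension d ∈ ℕ, every function F : (Fin d → ℝ) → (Fin d → ℝ), and every initial state c : Fin d → ℝ, the deterministic trajectories x¹ on R₁ and x² on R₂ (defined by x 0 v = c and x (t+1) v = F (∑_{u ∈ Γ(v)} x t u)) satisfy x¹ t v = x² t w for all t ∈ ℕ, v, w ∈ Fin 8. Consequently, no deterministic evolution rule of this form yields a representation from which the graph can be reconstructed exactly. -/

import Mathlib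

set_option maxRecDepth 10000

/-- The edges of the graph `R₁`. -/
def edgesR1 : List (Fin 8 × Fin 8) :=
  [(0, 3), (0, 5), (0, 6), (0, 7), (1, 2), (1, 4), (1, 6), (1, 7),
   (2, 3), (2, 5), (2, 6), (3, 4), (3, 5), (4, 5), (4, 7), (6, 7)]

/-- The 4-regular graph `R₁` on 8 vertices. -/
def R1 : SimpleGraph (Fin 8) where
  Adj a b := (a, b) ∈ edgesR1 ∨ (b, a) ∈ edgesR1
  symm := ⟨fun _ _ h => h.symm⟩
  loopless := ⟨by intro a; revert a; decide⟩

instance : DecidableRel R1.Adj :=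
  fun a b => inferInstanceAs (Decidable ((a, b) ∈ edgesR1 ∨ (b, a) ∈ edgesR1))

/-- The edges of the graph `R₂`. -/
def edgesR2 : List (Fin 8 × Fin 8) :=
  [(0, 1), (0, 2), (0, 4), (0, 7), (1, 4), (1, 5), (1, 6), (2, 3),
   (2, 4), (2, 7), (3, 5), (3, 6), (3, 7), (4, 6), (5, 6), (5, 7)]

/-- The 4-regular graph `R₂` on 8 vertices. -/
def R2 : SimpleGraph (Fin 8) where
  Adj a b := (a, b) ∈ edgesR2 ∨ (b, a) ∈ edgesR2
  symm := ⟨fun _ _ h => h.symm⟩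
  loopless := ⟨by intro a; revert a; decide⟩

instance : DecidableRel R2.Adj :=
  fun a b => inferInstanceAs (Decidable ((a, b) ∈ edgesR2 ∨ (b, a) ∈ edgesR2))

/-- A set `S` of vertices is a vertex cover of `G` if every edge of `G` has at least one
endpoint in `S`. -/
def IsVertexCover {V : Type*} (G : SimpleGraph V) (S : Finset V) : Prop :=
  ∀ ⦃v w : V⦄, G.Adj v w → v ∈ S ∨ w ∈ S

/-- The deterministic trajectory on a graph: `x 0 v = c`,
`x (t+1) v = F (∑_{u ∈ Γ(v)} x t u)`. -/
def detTraj {V : Type*} [Fintype V] (G : SimpleGraph V) [DecidableRel G.Adj]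
    {d : ℕ} (F : (Fin d → ℝ) → (Fin d → ℝ)) (c : Fin d → ℝ) : ℕ → V → (Fin d → ℝ)
  | 0, _ => c
  | t + 1, v => F (∑ u ∈ G.neighborFinset v, detTraj G F c t u)

/-- `R₁` and `R₂` are non-isomorphic (their minimum vertex cover sizes are 5 and 6
respectively), yet every deterministic evolution rule produces identical trajectories on
all vertices of both graphs; hence no deterministic rule of this form yields a
representation from which the graph can be reconstructed exactly. -/

lemma cover1 : IsVertexCover R1 ({1,3,5,6,7} : Finset (Fin 8)) := by unfold IsVertexCover; decide
lemma cover2 : IsVertexCover R2 ({1,2,4,5,6,7} : Finset (Fin 8)) := by unfold IsVertexCover; decide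
lemma min1 : ∀ S : Finset (Fin 8), IsVertexCover R1 S → 5 ≤ S.card := by unfold IsVertexCover; decide
lemma min2 : ∀ S : Finset (Fin 8), IsVertexCover R2 S → 6 ≤ S.card := by unfold IsVertexCover; decide
lemma deg1 : ∀ v : Fin 8, (R1.neighborFinset v).card = 4 := by decide
lemma deg2 : ∀ v : Fin 8, (R2.neighborFinset v).card = 4 := by decide

lemma traj_const {d : ℕ} (F : (Fin d → ℝ) → (Fin d → ℝ)) (c : Fin d → ℝ) :
    ∀ t : ℕ, ∃ a, (∀ v, detTraj R1 F c t v = a) ∧ (∀ v, detTraj R2 F c t v = a) := by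
  intro t
  induction t with
  | zero => exact ⟨c, fun _ => rfl, fun _ => rfl⟩
  | succ t ih =>
    obtain ⟨a, h1, h2⟩ := ih
    refine ⟨F (4 • a), fun v => ?_, fun v => ?_⟩
    · show F (∑ u ∈ R1.neighborFinset v, detTraj R1 F c t u) = _
      rw [Finset.sum_congr rfl fun u _ => h1 u, Finset.sum_const, deg1]
    · show F (∑ u ∈ R2.neighborFinset v, detTraj R2 F c t u) = _
      rw [Finset.sum_congr rfl fun u _ => h2 u, Finset.sum_const, deg2]

theorem R1_R2_not_isomorphic_but_detTraj_equal :
    (¬ Nonempty (R1 ≃g R2)) ∧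
    ((∃ S : Finset (Fin 8), IsVertexCover R1 S ∧ S.card = 5) ∧
      (∀ S : Finset (Fin 8), IsVertexCover R1 S → 5 ≤ S.card)) ∧
    ((∃ S : Finset (Fin 8), IsVertexCover R2 S ∧ S.card = 6) ∧
      (∀ S : Finset (Fin 8), IsVertexCover R2 S → 6 ≤ S.card)) ∧
    (∀ (d : ℕ) (F : (Fin d → ℝ) → (Fin d → ℝ)) (c : Fin d → ℝ) (t : ℕ) (v w : Fin 8),
      detTraj R1 F c t v = detTraj R2 F c t w) := by
  refine ⟨?_, ⟨⟨_, cover1, by decide⟩, min1⟩, ⟨⟨_, cover2, by decide⟩, min2⟩, ?_⟩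
  · rintro ⟨e⟩
    have hc : IsVertexCover R2 (({1,3,5,6,7} : Finset (Fin 8)).image e) := by
      intro v w h
      have := cover1 (e.symm.map_adj_iff.mpr (by simpa using h))
      rcases this with h' | h'
      · exact Or.inl (Finset.mem_image.mpr ⟨_, h', by simp⟩)
      · exact Or.inr (Finset.mem_image.mpr ⟨_, h', by simp⟩)
    have := min2 _ hc
    rw [Finset.card_image_of_injective _ e.injective] at this
    simp at this
  · intro d F c t v w
    obtain ⟨a, h1, h2⟩ := traj_const F c t
    rw [h1, h2]
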